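/- Let A be an m × N real matrix with m < N. If every nonzero vector in the nullspace of A has more than 2k nonzero entries (equivalently 2k < Spark(A)), then for any k-sparse vectors c₁, c₂ with Ac₁ = Ac₂, we have c₁ = c₂. Conversely, if some nonzero nullspace vector has at most 2k nonzero entries, there exist distinct k-sparse vectors c₁ ≠ c₂ with Ac₁ = Ac₂. -/

import Mathlib

/-- ℓ0 "norm": number of nonzero entries. -/
noncomputable def l0 {N : ℕ} (η : Fin N → ℝ) : ℕ :=
  (Finset.univ.filter fun j => η j ≠ 0).card

lemma l0_sub_le {N : ℕ} (a b : Fin N → ℝ) : l0 (a - b) ≤ l0 a + l0 b := by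
  classical
  unfold l0
  refine le_trans (Finset.card_le_card ?_) (Finset.card_union_le _ _)
  intro j hj
  simp only [Finset.mem_filter, Finset.mem_union, Finset.mem_univ, true_and] at *
  by_contra h
  push_neg at h
  simp [Pi.sub_apply, h.1, h.2] at hj

theorem spark_uniqueness_iff {m N k : ℕ} (hmN : m < N) (A : Matrix (Fin m) (Fin N) ℝ) :
    ((∀ η : Fin N → ℝ, A.mulVec η = 0 → η ≠ 0 → 2 * k < l0 η) →
      ∀ c₁ c₂ : Fin N → ℝ, l0 c₁ ≤ k → l0 c₂ ≤ k →
        A.mulVec c₁ = A.mulVec c₂ → c₁ = c₂) ∧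
    ((∃ η : Fin N → ℝ, A.mulVec η = 0 ∧ η ≠ 0 ∧ l0 η ≤ 2 * k) →
      ∃ c₁ c₂ : Fin N → ℝ, l0 c₁ ≤ k ∧ l0 c₂ ≤ k ∧ c₁ ≠ c₂ ∧
        A.mulVec c₁ = A.mulVec c₂) := by
  classical
  constructor
  · intro hspark c₁ c₂ h₁ h₂ hA
    by_contra hne
    have hker : A.mulVec (c₁ - c₂) = 0 := by
      rw [Matrix.mulVec_sub, hA, sub_self]
    have hnz : c₁ - c₂ ≠ 0 := sub_ne_zero.mpr hne
    have := hspark _ hker hnz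
    have hle : l0 (c₁ - c₂) ≤ 2 * k := by
      calc l0 (c₁ - c₂) ≤ l0 c₁ + l0 c₂ := l0_sub_le _ _
        _ ≤ 2 * k := by omega
    omega
  · rintro ⟨η, hker, hnz, hle⟩
    set s : Finset (Fin N) := Finset.univ.filter fun j => η j ≠ 0 with hs
    obtain ⟨t, hts, htc⟩ := Finset.exists_subset_card_eq (s := s) (n := min k s.card) (min_le_right _ _)
    set c₁ : Fin N → ℝ := fun j => if j ∈ t then η j else 0 with hc₁
    set c₂ : Fin N → ℝ := c₁ - η with hc₂
    refine ⟨c₁, c₂, ?_, ?_, ?_, ?_⟩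
    · calc l0 c₁ ≤ t.card := by
            apply Finset.card_le_card
            intro j hj
            simp only [Finset.mem_filter, Finset.mem_univ, true_and, hc₁] at hj ⊢
            by_contra h; simp [h] at hj
        _ ≤ k := by rw [htc]; exact min_le_left _ _
    · have hsub : (Finset.univ.filter fun j => c₂ j ≠ 0) ⊆ s \ t := by
        intro j hj
        simp only [Finset.mem_filter, Finset.mem_univ, true_and, hc₂, hc₁, Pi.sub_apply] at hj
        by_cases hjt : j ∈ t
        · simp [hjt] at hj
        · simp only [hjt, if_false, zero_sub, neg_ne_zero] at hj
          simp [Finset.mem_sdiff, hs, hjt, hj]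
      calc l0 c₂ ≤ (s \ t).card := Finset.card_le_card hsub
        _ = s.card - t.card := Finset.card_sdiff_of_subset hts
        _ ≤ k := by
            have : s.card ≤ 2 * k := hle
            rw [htc]; omega
    · intro h
      apply hnz
      have : c₁ - c₂ = η := by simp [hc₂]
      rw [h, sub_self] at this
      exact this.symm
    · have h1 : c₁ - c₂ = η := by simp [hc₂]
      have : A.mulVec c₁ - A.mulVec c₂ = 0 := by
        rw [← Matrix.mulVec_sub, h1, hker]
      exact sub_eq_zero.mp this
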